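/- arXiv:1702.00484 — 2 statements merged into one kernel-verified Lean document; each statement's English description precedes it below -/
import Mathlib

section
/- Let G be a finite group and let H_1, …, H_t be subgroups of G such that G = H_1 ∪ … ∪ H_t and H_i ∩ H_j = {1} for all i ≠ j. Then for every nontrivial finite-dimensional complex irreducible representation V of G, one has |H_1|·dim V^{H_1} + |H_2|·dim V^{H_2} + … + |H_t|·dim V^{H_t} = (t − 1)·dim V, where V^{H} denotes the subspace of V of vectors fixed by every element of H. -/
open Module

theorem my_avg {G : Type*} [Group G] [Fintype G] {V : Type*} [AddCommGroup V] [Module ℂ V]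
    [FiniteDimensional ℂ V] (ρ : Representation ℂ G V) :
    ∑ g : G, LinearMap.trace ℂ V (ρ g) = (Fintype.card G : ℂ) * finrank ℂ ρ.invariants := by
  have hc : (Fintype.card G : ℂ) ≠ 0 := Nat.cast_ne_zero.2 Fintype.card_ne_zero
  have : Invertible (Fintype.card G : ℂ) := invertibleOfNonzero hc
  have h := (Representation.isProj_averageMap ρ).trace
  have h2 : LinearMap.trace ℂ V (Representation.averageMap ρ) =
      ⅟ (Fintype.card G : ℂ) • ∑ g : G, LinearMap.trace ℂ V (ρ g) := by
    simp [Representation.averageMap, GroupAlgebra.average, map_sum]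
  rw [h2] at h
  have := congrArg (fun x => (Fintype.card G : ℂ) * x) h
  simpa [smul_eq_mul, ← mul_assoc, mul_invOf_self] using this



/-- If the subgroups `H 1, …, H t` of a finite group `G` cover `G` and pairwise intersect
trivially, then for every nontrivial finite-dimensional complex irreducible representation
`ρ` of `G` on `V` one has `∑ i, |H i| · dim V^{H i} = (t - 1) · dim V`. -/
theorem sum_card_mul_finrank_invariants {G : Type*} [Group G] [Fintype G] {t : ℕ}
    (H : Fin t → Subgroup G)
    (hcover : ∀ g : G, ∃ i : Fin t, g ∈ H i)
    (hdisj : ∀ i j : Fin t, i ≠ j → H i ⊓ H j = ⊥)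
    {V : Type*} [AddCommGroup V] [Module ℂ V] [FiniteDimensional ℂ V]
    (ρ : Representation ℂ G V)
    (hirr : ∀ U : Submodule ℂ V, (∀ g : G, ∀ v ∈ U, ρ g v ∈ U) → U = ⊥ ∨ U = ⊤)
    (hnontriv : ∃ (g : G) (v : V), ρ g v ≠ v) :
    ∑ i : Fin t,
        Nat.card (H i) *
          Module.finrank ℂ (Representation.invariants (ρ.comp (H i).subtype)) =
      (t - 1) * Module.finrank ℂ V := by
  classical
  obtain ⟨i0, _⟩ := hcover 1
  have ht : 1 ≤ t := i0.pos
  set χ : G → ℂ := fun g => LinearMap.trace ℂ V (ρ g) with hχ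
  -- sum of character over whole group is zero
  have hinv : ρ.invariants = ⊥ := by
    rcases hirr ρ.invariants (fun g v hv => by
      rw [(Representation.mem_invariants ρ v).1 hv g]; exact hv) with h | h
    · exact h
    · exfalso
      obtain ⟨g, v, hgv⟩ := hnontriv
      exact hgv (((Representation.mem_invariants ρ v).1 (h ▸ Submodule.mem_top)) g)
  have hsum0 : ∑ g : G, χ g = 0 := by
    have := my_avg ρ
    rw [hinv] at this
    simpa using this
  -- per-subgroup averaging
  have hsub : ∀ i : Fin t, ∑ h : (H i), χ (h : G) =
      (Nat.card (H i) : ℂ) * finrank ℂ (Representation.invariants (ρ.comp (H i).subtype)) := by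
    intro i
    have := my_avg (ρ.comp (H i).subtype)
    rw [Nat.card_eq_fintype_card]
    exact this
  -- finset versions
  set S : Fin t → Finset G := fun i => Set.toFinset (H i : Set G) with hS
  have hmem : ∀ i (g : G), g ∈ S i ↔ g ∈ H i := by intro i g; simp [hS]
  have hSsum : ∀ i, ∑ h : (H i), χ (h : G) = ∑ g ∈ S i, χ g := by
    intro i
    exact (Finset.sum_subtype (S i) (hmem i) χ).symm
  have h1mem : ∀ i, (1 : G) ∈ S i := fun i => (hmem i 1).2 (one_mem _)
  have hsplit : ∀ i, ∑ g ∈ S i, χ g = χ 1 + ∑ g ∈ (S i).erase 1, χ g := by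
    intro i
    rw [← Finset.add_sum_erase _ _ (h1mem i)]
  -- the erased sets partition univ.erase 1
  have hbiUnion : (Finset.univ.erase (1 : G)) =
      Finset.univ.biUnion (fun i => (S i).erase 1) := by
    ext g
    simp only [Finset.mem_erase, Finset.mem_univ, and_true, Finset.mem_biUnion, true_and]
    constructor
    · intro hg
      obtain ⟨i, hi⟩ := hcover g
      exact ⟨i, hg, (hmem i g).2 hi⟩
    · rintro ⟨i, hg, -⟩
      exact hg
  have hdisj' : ∀ i ∈ (Finset.univ : Finset (Fin t)), ∀ j ∈ Finset.univ, i ≠ j →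
      Disjoint ((S i).erase 1) ((S j).erase 1) := by
    intro i _ j _ hij
    rw [Finset.disjoint_left]
    intro g hgi hgj
    rw [Finset.mem_erase, hmem] at hgi hgj
    have : g ∈ H i ⊓ H j := ⟨hgi.2, hgj.2⟩
    rw [hdisj i j hij] at this
    exact hgi.1 (by simpa using this)
  have hpart : ∑ i : Fin t, ∑ g ∈ (S i).erase 1, χ g = ∑ g ∈ Finset.univ.erase (1 : G), χ g := by
    rw [hbiUnion, Finset.sum_biUnion hdisj']
  have herase : ∑ g ∈ Finset.univ.erase (1 : G), χ g = - χ 1 := by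
    have h0 := Finset.add_sum_erase Finset.univ χ (Finset.mem_univ (1 : G))
    rw [hsum0] at h0
    linear_combination h0
  have hchi1 : χ 1 = (finrank ℂ V : ℂ) := by
    simp [hχ]
  have key : (∑ i : Fin t, (Nat.card (H i) : ℂ) *
      (finrank ℂ (Representation.invariants (ρ.comp (H i).subtype)) : ℂ)) =
      ((t : ℂ) - 1) * (finrank ℂ V : ℂ) := by
    calc (∑ i : Fin t, (Nat.card (H i) : ℂ) *
        (finrank ℂ (Representation.invariants (ρ.comp (H i).subtype)) : ℂ))
        = ∑ i : Fin t, ∑ h : (H i), χ (h : G) := by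
          refine Finset.sum_congr rfl fun i _ => ?_
          rw [hsub i]
      _ = ∑ i : Fin t, (χ 1 + ∑ g ∈ (S i).erase 1, χ g) := by
          refine Finset.sum_congr rfl fun i _ => ?_
          rw [hSsum i, hsplit i]
      _ = (t : ℂ) * χ 1 + ∑ i : Fin t, ∑ g ∈ (S i).erase 1, χ g := by
          rw [Finset.sum_add_distrib]
          simp [mul_comm]
      _ = (t : ℂ) * χ 1 + (- χ 1) := by rw [hpart, herase]
      _ = ((t : ℂ) - 1) * (finrank ℂ V : ℂ) := by rw [hchi1]; ring
  have hcast : ((∑ i : Fin t,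
      Nat.card (H i) *
        finrank ℂ (Representation.invariants (ρ.comp (H i).subtype)) : ℕ) : ℂ) =
      (((t - 1) * finrank ℂ V : ℕ) : ℂ) := by
    push_cast [Nat.cast_sub ht]
    exact key
  exact_mod_cast hcast
end

section
/- Let q be an odd prime and let G be the dihedral group of order 4q, presented as G = ⟨r, s : r^{2q} = s² = (sr)² = 1⟩. Set H_1 = ⟨s⟩, H_2 = ⟨sr⟩ and H_3 = ⟨r⟩. Then for every nontrivial finite-dimensional complex irreducible representation V of G, one has dim V^{H_1} + dim V^{H_2} + dim V^{H_3} = dim V. -/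
set_option maxHeartbeats 1000000

open Module LinearMap Representation Subgroup

section helpers

variable {V : Type*} [AddCommGroup V] [Module ℂ V] [FiniteDimensional ℂ V]

/-- Averaging: sum of traces over a finite group equals card times dimension of invariants. -/
lemma avg_trace' {H : Type*} [Group H] [Fintype H] (σ : Representation ℂ H V) :
    ∑ h : H, LinearMap.trace ℂ V (σ h) =
      (Fintype.card H : ℂ) * (Module.finrank ℂ σ.invariants : ℂ) := by
  haveI : Invertible ((Fintype.card H : ℂ)) :=
    invertibleOfNonzero (Nat.cast_ne_zero.mpr Fintype.card_ne_zero)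
  have h1 := (σ.isProj_averageMap).trace
  have h2 : σ.averageMap = ⅟(Fintype.card H : ℂ) • ∑ h : H, (σ h : V →ₗ[ℂ] V) := by
    simp [Representation.averageMap, GroupAlgebra.average, map_sum,
      Representation.asAlgebraHom_single, MonoidAlgebra.of_apply]
  rw [h2, map_smul, map_sum] at h1
  rw [← h1, smul_eq_mul, ← mul_assoc, mul_invOf_self, one_mul]

lemma repr_trace_conj {G : Type*} [Group G] (ρ : Representation ℂ G V) (g x : G) :
    LinearMap.trace ℂ V (ρ (x * g * x⁻¹)) = LinearMap.trace ℂ V (ρ g) := by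
  rw [map_mul, LinearMap.trace_mul_comm, ← map_mul, inv_mul_cancel_left]

lemma sum_zpowers' {G : Type*} [Group G] (t : G) (ht : IsOfFinOrder t)
    [Fintype (Subgroup.zpowers t)] (f : G → ℂ) :
    ∑ h : Subgroup.zpowers t, f h = ∑ k : Fin (orderOf t), f (t ^ (k : ℕ)) := by
  refine (Fintype.sum_equiv (finEquivZPowers ht) _ _ ?_).symm
  intro k
  rfl

lemma sum_parity' (g : ℕ → ℂ) (a b : ℂ) (ha : ∀ m, g (2 * m) = a) (hb : ∀ m, g (2 * m + 1) = b)
    (N : ℕ) : ∑ k ∈ Finset.range (2 * N), g k = N * a + N * b := by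
  induction N with
  | zero => simp
  | succ N ih =>
      rw [show 2 * (N + 1) = 2 * N + 1 + 1 by ring, Finset.sum_range_succ, Finset.sum_range_succ,
        ih, ha N, hb N]
      push_cast
      ring

lemma sum_zmod' {n : ℕ} [NeZero n] (f : ZMod n → ℂ) :
    ∑ i : ZMod n, f i = ∑ k : Fin n, f ((k : ℕ) : ZMod n) := by
  refine (Fintype.sum_bijective (fun k : Fin n => ((k : ℕ) : ZMod n)) ?_ _ _ fun k => rfl).symm
  rw [Fintype.bijective_iff_injective_and_card]
  refine ⟨fun a b hab => ?_, by simp [ZMod.card]⟩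
  have := congrArg ZMod.val hab
  rwa [ZMod.val_cast_of_lt a.isLt, ZMod.val_cast_of_lt b.isLt, ← Fin.ext_iff] at this

lemma inv_r' {n : ℕ} (j : ZMod n) : (DihedralGroup.r j)⁻¹ = DihedralGroup.r (-j) := rfl

/-- The sum-type description of the dihedral group. -/
def dihedralSumEquiv (n : ℕ) : ZMod n ⊕ ZMod n ≃ DihedralGroup n where
  toFun := fun x => match x with
    | Sum.inl j => DihedralGroup.r j
    | Sum.inr j => DihedralGroup.sr j
  invFun := fun x => match x with
    | DihedralGroup.r j => Sum.inl j
    | DihedralGroup.sr j => Sum.inr j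
  left_inv := by rintro (x | x) <;> rfl
  right_inv := by rintro (x | x) <;> rfl

lemma sum_dihedral' {n : ℕ} [NeZero n] (f : DihedralGroup n → ℂ) :
    ∑ g : DihedralGroup n, f g =
      ∑ i : ZMod n, f (DihedralGroup.r i) + ∑ i : ZMod n, f (DihedralGroup.sr i) := by
  rw [← Fintype.sum_equiv (dihedralSumEquiv n) (fun x => f (dihedralSumEquiv n x)) f
    (fun x => rfl), Fintype.sum_sum_type]
  rfl

lemma card_zpowers'' {G : Type*} [Group G] (t : G) (ht : IsOfFinOrder t)
    [Fintype (Subgroup.zpowers t)] : Fintype.card (Subgroup.zpowers t) = orderOf t := by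
  rw [← Nat.card_eq_fintype_card, Nat.card_zpowers]

end helpers

open DihedralGroup in


/-- Let `q` be an odd prime and `G` the dihedral group of order `4q`, with `r` the rotation
of order `2q` and `s`, `s*r` reflections.  For every nontrivial finite-dimensional complex
irreducible representation `ρ` of `G` on `V` one has
`dim V^{⟨s⟩} + dim V^{⟨sr⟩} + dim V^{⟨r⟩} = dim V`. -/
theorem dihedral_admissible_invariants {q : ℕ} (hq : q.Prime) (hodd : Odd q)
    {V : Type*} [AddCommGroup V] [Module ℂ V] [FiniteDimensional ℂ V]
    (ρ : Representation ℂ (DihedralGroup (2 * q)) V)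
    (hirr : ∀ U : Submodule ℂ V,
      (∀ g : DihedralGroup (2 * q), ∀ v ∈ U, ρ g v ∈ U) → U = ⊥ ∨ U = ⊤)
    (hnontriv : ∃ (g : DihedralGroup (2 * q)) (v : V), ρ g v ≠ v) :
    Module.finrank ℂ
        (Representation.invariants
          (ρ.comp (Subgroup.zpowers (DihedralGroup.sr 0)).subtype)) +
      Module.finrank ℂ
        (Representation.invariants
          (ρ.comp (Subgroup.zpowers (DihedralGroup.sr 1)).subtype)) +
      Module.finrank ℂ
        (Representation.invariants
          (ρ.comp (Subgroup.zpowers (DihedralGroup.r 1)).subtype)) =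
      Module.finrank ℂ V := by
  classical
  haveI : NeZero (2 * q) := ⟨by have := hq.pos; omega⟩
  set f : DihedralGroup (2 * q) → ℂ := fun g => LinearMap.trace ℂ V (ρ g) with hfdef
  set n : ℕ := Module.finrank ℂ V with hndef
  set d1 : ℕ := Module.finrank ℂ
      (Representation.invariants (ρ.comp (Subgroup.zpowers (DihedralGroup.sr 0)).subtype))
  set d2 : ℕ := Module.finrank ℂ
      (Representation.invariants (ρ.comp (Subgroup.zpowers (DihedralGroup.sr 1)).subtype))
  set d3 : ℕ := Module.finrank ℂ
      (Representation.invariants (ρ.comp (Subgroup.zpowers (DihedralGroup.r 1)).subtype))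
  have hf1 : f 1 = (n : ℂ) := by
    simp [hfdef, hndef]
  -- the full-group invariants vanish
  have hinv : Representation.invariants ρ = ⊥ := by
    rcases hirr ρ.invariants (fun g v hv => by rw [hv g]; exact hv) with h | h
    · exact h
    · exfalso
      obtain ⟨g, v, hne⟩ := hnontriv
      exact hne (((Representation.mem_invariants ρ v).mp (h ▸ Submodule.mem_top)) g)
  have hsum0 : ∑ g : DihedralGroup (2 * q), f g = 0 := by
    have h := avg_trace' ρ
    rw [hinv] at h
    simpa using h
  -- reflection traces depend only on parity
  have heven : ∀ m : ℕ,
      f (DihedralGroup.sr ((2 * m : ℕ) : ZMod (2 * q))) = f (DihedralGroup.sr 0) := by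
    intro m
    have key : (DihedralGroup.sr ((2 * m : ℕ) : ZMod (2 * q))) =
        DihedralGroup.r (-(m : ZMod (2 * q))) * DihedralGroup.sr 0 *
          (DihedralGroup.r (-(m : ZMod (2 * q))))⁻¹ := by
      rw [inv_r', r_mul_sr, sr_mul_r]
      congr 1
      push_cast
      ring
    rw [key]; exact repr_trace_conj ρ _ _
  have hoddtr : ∀ m : ℕ,
      f (DihedralGroup.sr ((2 * m + 1 : ℕ) : ZMod (2 * q))) = f (DihedralGroup.sr 1) := by
    intro m
    have key : (DihedralGroup.sr ((2 * m + 1 : ℕ) : ZMod (2 * q))) =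
        DihedralGroup.r (-(m : ZMod (2 * q))) * DihedralGroup.sr 1 *
          (DihedralGroup.r (-(m : ZMod (2 * q))))⁻¹ := by
      rw [inv_r', r_mul_sr, sr_mul_r]
      congr 1
      push_cast
      ring
    rw [key]; exact repr_trace_conj ρ _ _
  -- sum over reflections
  have hsr : ∑ i : ZMod (2 * q), f (DihedralGroup.sr i) =
      (q : ℂ) * f (DihedralGroup.sr 0) + (q : ℂ) * f (DihedralGroup.sr 1) := by
    rw [sum_zmod' fun i => f (DihedralGroup.sr i),
      Fin.sum_univ_eq_sum_range (fun k : ℕ => f (DihedralGroup.sr ((k : ℕ) : ZMod (2 * q)))) (2 * q)]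
    exact sum_parity' _ _ _ heven hoddtr q
  -- subgroup sums
  have A1 : (n : ℂ) + f (DihedralGroup.sr 0) = 2 * (d1 : ℂ) := by
    have h := avg_trace' (ρ.comp (Subgroup.zpowers (DihedralGroup.sr (0 : ZMod (2 * q)))).subtype)
    have h2 : ∑ h : Subgroup.zpowers (DihedralGroup.sr (0 : ZMod (2 * q))), f ↑h =
        (Fintype.card (Subgroup.zpowers (DihedralGroup.sr (0 : ZMod (2 * q)))) : ℂ) * (d1 : ℂ) := h
    rw [card_zpowers'' _ (isOfFinOrder_of_finite _), DihedralGroup.orderOf_sr,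
      sum_zpowers' _ (isOfFinOrder_of_finite _) f,
      Fin.sum_univ_eq_sum_range (fun k : ℕ => f (DihedralGroup.sr (0 : ZMod (2 * q)) ^ k)) _,
      DihedralGroup.orderOf_sr] at h2
    rw [Finset.sum_range_succ, Finset.sum_range_succ, Finset.sum_range_zero, pow_zero, pow_one,
      zero_add, hf1] at h2
    rw [h2]
    norm_num
  have A2 : (n : ℂ) + f (DihedralGroup.sr 1) = 2 * (d2 : ℂ) := by
    have h := avg_trace' (ρ.comp (Subgroup.zpowers (DihedralGroup.sr (1 : ZMod (2 * q)))).subtype)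
    have h2 : ∑ h : Subgroup.zpowers (DihedralGroup.sr (1 : ZMod (2 * q))), f ↑h =
        (Fintype.card (Subgroup.zpowers (DihedralGroup.sr (1 : ZMod (2 * q)))) : ℂ) * (d2 : ℂ) := h
    rw [card_zpowers'' _ (isOfFinOrder_of_finite _), DihedralGroup.orderOf_sr,
      sum_zpowers' _ (isOfFinOrder_of_finite _) f,
      Fin.sum_univ_eq_sum_range (fun k : ℕ => f (DihedralGroup.sr (1 : ZMod (2 * q)) ^ k)) _,
      DihedralGroup.orderOf_sr] at h2
    rw [Finset.sum_range_succ, Finset.sum_range_succ, Finset.sum_range_zero, pow_zero, pow_one,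
      zero_add, hf1] at h2
    rw [h2]
    norm_num
  have A3 : ∑ i : ZMod (2 * q), f (DihedralGroup.r i) = (2 * q : ℂ) * (d3 : ℂ) := by
    have h := avg_trace' (ρ.comp (Subgroup.zpowers (DihedralGroup.r (1 : ZMod (2 * q)))).subtype)
    have h2 : ∑ h : Subgroup.zpowers (DihedralGroup.r (1 : ZMod (2 * q))), f ↑h =
        (Fintype.card (Subgroup.zpowers (DihedralGroup.r (1 : ZMod (2 * q)))) : ℂ) * (d3 : ℂ) := h
    rw [card_zpowers'' _ (isOfFinOrder_of_finite _), DihedralGroup.orderOf_r_one,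
      sum_zpowers' _ (isOfFinOrder_of_finite _) f,
      Fin.sum_univ_eq_sum_range (fun k : ℕ => f (DihedralGroup.r (1 : ZMod (2 * q)) ^ k)) _,
      DihedralGroup.orderOf_r_one] at h2
    push_cast at h2
    rw [sum_zmod' fun i => f (DihedralGroup.r i),
      Fin.sum_univ_eq_sum_range (fun k : ℕ => f (DihedralGroup.r ((k : ℕ) : ZMod (2 * q)))) (2 * q),
      ← h2]
    refine Finset.sum_congr rfl fun k _ => ?_
    rw [DihedralGroup.r_one_pow]
  have E3 : (2 * q : ℂ) * (d3 : ℂ) + ((q : ℂ) * f (DihedralGroup.sr 0) +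
      (q : ℂ) * f (DihedralGroup.sr 1)) = 0 := by
    rw [← A3, ← hsr, ← sum_dihedral' f, hsum0]
  have hq0 : (q : ℂ) ≠ 0 := Nat.cast_ne_zero.mpr hq.pos.ne'
  have h2q : (2 * (q : ℂ)) ≠ 0 := by
    simp [hq0]
  have H : (2 * (q : ℂ)) * ((d1 : ℂ) + d2 + d3) = (2 * (q : ℂ)) * (n : ℂ) := by
    linear_combination (-(q : ℂ)) * A1 + (-(q : ℂ)) * A2 + E3
  have := mul_left_cancel₀ h2q H
  exact_mod_cast this
end
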